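/- Suppose (S, D) are binary random variables and X a random variable such that S(1), S(0) are potential responses with S = S(D), D ⊥ (S(0), S(1), X), and P(D=1|X=x) = p(x) ∈ (0,1). Assume P(S=1|D=d,X=x) = P(S(d)=1|X=x) for d ∈ {0,1}. Then q(x) := P(S(0)=1|X=x)/P(S(1)=1|X=x) = [p(x)·P(D=0|S=1,X=x)] / [(1−p(x))·P(D=1|S=1,X=x)]. -/

import Mathlib

open MeasureTheory Set ProbabilityTheory

/-- The trimming probability `q(x) = P(S(0)=1|X=x)/P(S(1)=1|X=x)` is identified
by the conditional treatment probabilities among responders. -/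
theorem trimming_prob_missing_covariates
    {Ω 𝒳 : Type*} [MeasurableSpace Ω] [MeasurableSpace 𝒳] [MeasurableSingletonClass 𝒳]
    (μ : Measure Ω) [IsProbabilityMeasure μ]
    (D S S0 S1 : Set Ω) (X : Ω → 𝒳) (x : 𝒳) (p : 𝒳 → ℝ)
    (hD : MeasurableSet D) (hS0 : MeasurableSet S0) (hS1 : MeasurableSet S1)
    (hX : Measurable X)
    (hS : S = (D ∩ S1) ∪ (Dᶜ ∩ S0))
    (hXx : μ (X ⁻¹' {x}) ≠ 0)
    (hp : p x = ((μ[|X ⁻¹' {x}]) D).toReal)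
    (hp01 : p x ∈ Set.Ioo (0:ℝ) 1)
    (hc1 : (μ[|D ∩ X ⁻¹' {x}]) S = (μ[|X ⁻¹' {x}]) S1)
    (hc0 : (μ[|Dᶜ ∩ X ⁻¹' {x}]) S = (μ[|X ⁻¹' {x}]) S0)
    (hS1pos : 0 < ((μ[|X ⁻¹' {x}]) S1).toReal)
    (hS0pos : 0 < ((μ[|X ⁻¹' {x}]) S0).toReal)
    (hSD1 : 0 < ((μ[|S ∩ X ⁻¹' {x}]) D).toReal) :
    ((μ[|X ⁻¹' {x}]) S0).toReal / ((μ[|X ⁻¹' {x}]) S1).toReal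
      = (p x * ((μ[|S ∩ X ⁻¹' {x}]) Dᶜ).toReal)
        / ((1 - p x) * ((μ[|S ∩ X ⁻¹' {x}]) D).toReal) := by
  have hA : MeasurableSet (X ⁻¹' {x}) := hX (measurableSet_singleton x)
  set A := X ⁻¹' {x} with hAdef
  have hSm : MeasurableSet S := by
    rw [hS]; exact (hD.inter hS1).union (hD.compl.inter hS0)
  have hfin : ∀ s : Set Ω, μ s ≠ ⊤ := fun s => measure_ne_top μ s
  have key : ∀ s t : Set Ω, MeasurableSet s →
      ((μ[|s]) t).toReal = (μ s).toReal⁻¹ * (μ (s ∩ t)).toReal := by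
    intro s t hs
    rw [ProbabilityTheory.cond_apply hs, ENNReal.toReal_mul, ENNReal.toReal_inv]
  -- set identities
  have e1 : D ∩ A ∩ S = D ∩ S1 ∩ A := by
    rw [hS]; ext ω
    simp only [Set.mem_inter_iff, Set.mem_union, Set.mem_compl_iff]
    tauto
  have e0 : Dᶜ ∩ A ∩ S = Dᶜ ∩ S0 ∩ A := by
    rw [hS]; ext ω
    simp only [Set.mem_inter_iff, Set.mem_union, Set.mem_compl_iff]
    tauto
  have eSA : S ∩ A = (D ∩ S1 ∩ A) ∪ (Dᶜ ∩ S0 ∩ A) := by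
    rw [hS]; ext ω
    simp only [Set.mem_inter_iff, Set.mem_union, Set.mem_compl_iff]
    tauto
  have eSAD : S ∩ A ∩ D = D ∩ S1 ∩ A := by
    rw [hS]; ext ω
    simp only [Set.mem_inter_iff, Set.mem_union, Set.mem_compl_iff]
    tauto
  have eSADc : S ∩ A ∩ Dᶜ = Dᶜ ∩ S0 ∩ A := by
    rw [hS]; ext ω
    simp only [Set.mem_inter_iff, Set.mem_union, Set.mem_compl_iff]
    tauto
  -- real quantities
  set mA := (μ A).toReal with hmAdef
  set a := (μ (D ∩ A)).toReal with hadef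
  set b := (μ (Dᶜ ∩ A)).toReal with hbdef
  set t1r := (μ (A ∩ S1)).toReal with ht1def
  set t0r := (μ (A ∩ S0)).toReal with ht0def
  set w1 := (μ (D ∩ S1 ∩ A)).toReal with hw1def
  set w0 := (μ (Dᶜ ∩ S0 ∩ A)).toReal with hw0def
  have hmA : 0 < mA := ENNReal.toReal_pos hXx (hfin A)
  have hp' : p x = mA⁻¹ * a := by
    rw [hp, key A D hA, Set.inter_comm A D]
  have hpa : a = p x * mA := by rw [hp']; field_simp
  have ha : 0 < a := by rw [hpa]; exact mul_pos hp01.1 hmA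
  have hsum : a + b = mA := by
    rw [hadef, hbdef, ← ENNReal.toReal_add (hfin _) (hfin _), hmAdef]
    congr 1
    rw [Set.inter_comm D A, Set.inter_comm Dᶜ A, ← Set.diff_eq]
    exact measure_inter_add_diff A hD
  have hpb : b = (1 - p x) * mA := by linear_combination hsum - hpa
  have hb : 0 < b := by rw [hpb]; exact mul_pos (by linarith [hp01.2]) hmA
  -- translate the conditional hypotheses
  have hc1' : a⁻¹ * w1 = mA⁻¹ * t1r := by
    rw [hw1def, ← e1, ht1def]
    rw [hadef, ← key _ _ (hD.inter hA), ← key _ _ hA, hc1]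
  have hc0' : b⁻¹ * w0 = mA⁻¹ * t0r := by
    rw [hw0def, ← e0, ht0def]
    rw [hbdef, ← key _ _ (hD.compl.inter hA), ← key _ _ hA, hc0]
  have ht1 : 0 < t1r := by
    have h := hS1pos; rw [key A S1 hA] at h
    have h2 : t1r = mA * (mA⁻¹ * t1r) := by field_simp
    rw [h2]; exact mul_pos hmA h
  have ht0 : 0 < t0r := by
    have h := hS0pos; rw [key A S0 hA] at h
    have h2 : t0r = mA * (mA⁻¹ * t0r) := by field_simp
    rw [h2]; exact mul_pos hmA h
  have hw1 : w1 = p x * t1r := by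
    have h1 : w1 = a * (mA⁻¹ * t1r) := by rw [← hc1']; field_simp
    rw [h1, hpa]; field_simp
  have hw0 : w0 = (1 - p x) * t0r := by
    have h0 : w0 = b * (mA⁻¹ * t0r) := by rw [← hc0']; field_simp
    rw [h0, hpb]; field_simp
  -- the responders set
  have hdisj : Disjoint (D ∩ S1 ∩ A) (Dᶜ ∩ S0 ∩ A) :=
    Set.disjoint_left.mpr fun ω h1 h2 => h2.1.1 h1.1.1
  have hu : (μ (S ∩ A)).toReal = w1 + w0 := by
    rw [eSA, measure_union hdisj ((hD.compl.inter hS0).inter hA),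
      ENNReal.toReal_add (hfin _) (hfin _)]
  have hupos : 0 < (μ (S ∩ A)).toReal := by
    rw [hu, hw1]; nlinarith [hw0, mul_pos hp01.1 ht1]
  -- finish
  have hune : (μ (S ∩ A)).toReal ≠ 0 := ne_of_gt hupos
  have hp0 : p x ≠ 0 := ne_of_gt hp01.1
  have hp1 : (1 : ℝ) - p x ≠ 0 := by have := hp01.2; intro h; linarith
  rw [key (S ∩ A) D (hSm.inter hA), key (S ∩ A) Dᶜ (hSm.inter hA), eSAD, eSADc,
    ← hw1def, ← hw0def, hw1, hw0, key A S0 hA, key A S1 hA, ← ht0def, ← ht1def]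
  field_simp [hune, hp0, hp1, ne_of_gt ht1, ne_of_gt hmA]
  ring
  exact mul_inv_cancel₀ (ne_of_gt hmA)
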